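/- Let m ≥ 1, δ > 0. Let k : [0,1] → m×m real symmetric matrices be measurable and square-integrable, and let (kₙ) be a sequence of measurable square-integrable functions [0,1] → m×m real symmetric matrices with ∫₀¹ ‖kₙ(s) − k(s)‖² ds → 0. Let φ and φₙ be continuous matrix-valued functions on [0,1] satisfying φ(t) = δt·I + ∫₀ᵗ (k(s)·φ(s) + φ(s)·k(s)) ds and φₙ(t) = δt·I + ∫₀ᵗ (kₙ(s)·φₙ(s) + φₙ(s)·kₙ(s)) ds for all t. Then sup_{n} sup_{t∈[0,1]} ‖φₙ(t)‖ < ∞, and sup_{t∈[0,1]} ‖φₙ(t) − φ(t)‖ → 0 as n → ∞. -/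

import Mathlib

open Matrix MeasureTheory Filter Set
open scoped Matrix.Norms.L2Operator

section Helpers

lemma aesm_of_entries {m : ℕ} {μ : Measure ℝ} (f : ℝ → Matrix (Fin m) (Fin m) ℝ)
    (h : ∀ i j, Measurable fun s => f s i j) : AEStronglyMeasurable f μ := by
  have hrw : f = fun s => ∑ i : Fin m, ∑ j : Fin m, (f s i j) • single i j (1:ℝ) := by
    funext s
    conv_lhs => rw [matrix_eq_sum_single (f s)]
    congr 1; funext i; congr 1; funext j
    rw [smul_single, smul_eq_mul, mul_one]
  rw [hrw]
  apply Finset.aestronglyMeasurable_fun_sum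
  intro i _
  apply Finset.aestronglyMeasurable_fun_sum
  intro j _
  exact ((h i j).aestronglyMeasurable).smul_const _

lemma norm_int_of_sq {m : ℕ} {g : ℝ → Matrix (Fin m) (Fin m) ℝ}
    (hmeas : AEStronglyMeasurable g (volume.restrict (Icc (0:ℝ) 1)))
    (hL2 : IntegrableOn (fun s => ‖g s‖ ^ 2) (Icc (0:ℝ) 1)) :
    IntegrableOn (fun s => ‖g s‖) (Icc (0:ℝ) 1) := by
  have hb : IntegrableOn (fun s => (‖g s‖ ^ 2 + 1) / 2) (Icc (0:ℝ) 1) :=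
    (hL2.add (integrableOn_const (by simp))).div_const 2
  refine hb.mono' hmeas.norm ?_
  filter_upwards with s
  have h1 : ‖g s‖ ≤ (‖g s‖ ^ 2 + 1) / 2 := by nlinarith [sq_nonneg (‖g s‖ - 1)]
  simpa using h1

lemma intInt {E : Type*} [NormedAddCommGroup E] {f : ℝ → E} {c d : ℝ} (hc : (0:ℝ) ≤ c) (hcd : c ≤ d) (hd : d ≤ 1)
    (hf : IntegrableOn f (Icc (0:ℝ) 1)) : IntervalIntegrable f volume c d := by
  have : IntegrableOn f (uIcc c d) := by
    rw [uIcc_of_le hcd]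
    exact hf.mono_set (Icc_subset_Icc hc hd)
  exact this.intervalIntegrable

lemma bu_int {b u : ℝ → ℝ} (hb : IntegrableOn b (Icc (0:ℝ) 1))
    (hu : ContinuousOn u (Icc (0:ℝ) 1)) :
    IntegrableOn (fun s => b s * u s) (Icc (0:ℝ) 1) := by
  obtain ⟨t₀, ht₀, hmax⟩ := isCompact_Icc.exists_isMaxOn (nonempty_Icc.2 zero_le_one)
    (hu.norm)
  set M := ‖u t₀‖ with hM
  refine ((hb.norm.const_mul M).mono' (hb.aestronglyMeasurable.mul (hu.aestronglyMeasurable measurableSet_Icc)) ?_)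
  filter_upwards [ae_restrict_mem measurableSet_Icc] with s hs
  have h1 : ‖u s‖ ≤ M := hmax hs
  have h2 : (0:ℝ) ≤ ‖b s‖ := norm_nonneg _
  calc ‖b s * u s‖ = ‖b s‖ * ‖u s‖ := by rw [norm_mul]
  _ ≤ ‖b s‖ * M := by nlinarith
  _ = M * ‖b s‖ := mul_comm _ _

lemma half_bound {b u : ℝ → ℝ} {c d a : ℝ} (hc : (0:ℝ) ≤ c) (hcd : c ≤ d) (hd : d ≤ 1)
    (hbu_int : IntegrableOn (fun s => b s * u s) (Icc (0:ℝ) 1))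
    (hb_int : IntegrableOn b (Icc (0:ℝ) 1))
    (hb0 : ∀ s ∈ Icc (0:ℝ) 1, 0 ≤ b s)
    (hu : ContinuousOn u (Icc (0:ℝ) 1)) (hu0 : ∀ t ∈ Icc (0:ℝ) 1, 0 ≤ u t)
    (ha : 0 ≤ a)
    (hhalf : (∫ s in c..d, b s) ≤ 1/2)
    (hineq : ∀ t ∈ Icc c d, u t ≤ a + ∫ s in c..t, b s * u s) :
    ∀ t ∈ Icc c d, u t ≤ 2*a := by
  have hsub : Icc c d ⊆ Icc (0:ℝ) 1 := Icc_subset_Icc hc hd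
  obtain ⟨t₀, ht₀, hmax⟩ := isCompact_Icc.exists_isMaxOn (nonempty_Icc.2 hcd)
    (hu.mono hsub)
  set M := u t₀ with hM
  have hM0 : 0 ≤ M := hu0 t₀ (hsub ht₀)
  have hkey : M ≤ a + M/2 := by
    have h1 := hineq t₀ ht₀
    have h2 : (∫ s in c..t₀, b s * u s) ≤ ∫ s in c..t₀, b s * M := by
      apply intervalIntegral.integral_mono_on ht₀.1
        (intInt hc ht₀.1 (le_trans ht₀.2 hd) hbu_int)
        ((intInt hc ht₀.1 (le_trans ht₀.2 hd) hb_int).mul_const M)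
      intro x hx
      have hx' : x ∈ Icc c d := ⟨hx.1, le_trans hx.2 ht₀.2⟩
      exact mul_le_mul_of_nonneg_left (hmax hx') (hb0 x (hsub hx'))
    have h3 : (∫ s in c..t₀, b s * M) = M * ∫ s in c..t₀, b s := by
      simp_rw [mul_comm (b _) M]
      exact intervalIntegral.integral_const_mul M b
    have h4 : (∫ s in c..t₀, b s) ≤ ∫ s in c..d, b s := by
      have := intervalIntegral.integral_add_adjacent_intervals
        (intInt hc ht₀.1 (le_trans ht₀.2 hd) hb_int)
        (intInt (le_trans hc ht₀.1) ht₀.2 hd hb_int)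
      have hnn : 0 ≤ ∫ s in t₀..d, b s := by
        apply intervalIntegral.integral_nonneg ht₀.2
        intro x hx
        exact hb0 x (hsub ⟨le_trans ht₀.1 hx.1, hx.2⟩)
      linarith [this]
    calc M ≤ a + ∫ s in c..t₀, b s * u s := h1
    _ ≤ a + M * ∫ s in c..t₀, b s := by rw [← h3]; linarith
    _ ≤ a + M * (1/2) := by
        have := le_trans h4 hhalf
        nlinarith
    _ = a + M/2 := by ring
  intro t ht
  calc u t ≤ M := hmax ht
  _ ≤ 2*a := by linarith

lemma gron {b u : ℝ → ℝ}
    (hbu_int : IntegrableOn (fun s => b s * u s) (Icc (0:ℝ) 1))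
    (hb_int : IntegrableOn b (Icc (0:ℝ) 1))
    (hb0 : ∀ s ∈ Icc (0:ℝ) 1, 0 ≤ b s)
    (hu : ContinuousOn u (Icc (0:ℝ) 1)) (hu0 : ∀ t ∈ Icc (0:ℝ) 1, 0 ≤ u t) :
    ∀ n : ℕ, ∀ c ∈ Icc (0:ℝ) 1, ∀ a : ℝ, 0 ≤ a →
      (∫ s in c..1, b s) ≤ (n+1)/2 →
      (∀ t ∈ Icc c 1, u t ≤ a + ∫ s in c..t, b s * u s) →
      ∀ t ∈ Icc c 1, u t ≤ a * 2^(n+1) := by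
  intro n
  induction n with
  | zero =>
    intro c hc a ha hint hineq t ht
    have := half_bound hc.1 hc.2 le_rfl hbu_int hb_int hb0 hu hu0 ha (by push_cast at hint; linarith) hineq t ht
    have h2 : (2:ℝ)^(0+1) = 2 := by norm_num
    nlinarith
  | succ n ih =>
    intro c hc a ha hint hineq
    by_cases h1 : (∫ s in c..1, b s) ≤ 1/2
    · intro t ht
      have h2 := half_bound hc.1 hc.2 le_rfl hbu_int hb_int hb0 hu hu0 ha h1 hineq t ht
      have h3 : (2:ℝ) ≤ 2^(n+1+1) := by
        calc (2:ℝ) = 2^1 := (pow_one 2).symm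
        _ ≤ 2^(n+1+1) := by apply pow_le_pow_right₀ one_le_two; omega
      nlinarith
    · push_neg at h1
      set F : ℝ → ℝ := fun t => ∫ s in c..t, b s with hF
      have hFcont : ContinuousOn F (Icc c 1) := by
        have : IntegrableOn b (uIcc c 1) := by
          rw [uIcc_of_le hc.2]; exact hb_int.mono_set (Icc_subset_Icc hc.1 le_rfl)
        simpa [hF, uIcc_of_le hc.2] using intervalIntegral.continuousOn_primitive_interval this
      have hFc : F c = 0 := by simp [hF]
      have hivt := intermediate_value_Icc hc.2 hFcont
      have hmem : (1/2 : ℝ) ∈ Icc (F c) (F 1) := by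
        constructor
        · rw [hFc]; norm_num
        · exact le_of_lt h1
      obtain ⟨t', ht', hFt'⟩ := hivt hmem
      have hsub1 : ∀ t ∈ Icc c t', u t ≤ 2*a := by
        apply half_bound hc.1 ht'.1 ht'.2 hbu_int hb_int hb0 hu hu0 ha (le_of_eq hFt')
        intro t ht
        exact hineq t ⟨ht.1, le_trans ht.2 ht'.2⟩
      have hbind : ∀ e f : ℝ, c ≤ e → e ≤ f → f ≤ 1 → IntervalIntegrable (fun s => b s * u s) volume e f :=
        fun e f he hef hf => intInt (le_trans hc.1 he) hef hf hbu_int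
      have hineq2 : ∀ t ∈ Icc t' 1, u t ≤ 2*a + ∫ s in t'..t, b s * u s := by
        intro t ht
        have hsplit := intervalIntegral.integral_add_adjacent_intervals
          (hbind c t' le_rfl ht'.1 ht'.2) (hbind t' t ht'.1 ht.1 ht.2)
        have h5 : (∫ s in c..t', b s * u s) ≤ a := by
          have h6 : (∫ s in c..t', b s * u s) ≤ ∫ s in c..t', b s * (2*a) := by
            apply intervalIntegral.integral_mono_on ht'.1 (hbind c t' le_rfl ht'.1 ht'.2)
              ((intInt hc.1 ht'.1 ht'.2 hb_int).mul_const _)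
            intro x hx
            exact mul_le_mul_of_nonneg_left (hsub1 x hx) (hb0 x ⟨le_trans hc.1 hx.1, le_trans hx.2 ht'.2⟩)
          have h7 : (∫ s in c..t', b s * (2*a)) = (2*a) * F t' := by
            simp_rw [mul_comm (b _) (2*a)]
            exact intervalIntegral.integral_const_mul _ b
          rw [h7, hFt'] at h6
          linarith
        have := hineq t ⟨le_trans ht'.1 ht.1, ht.2⟩
        rw [← hsplit] at this
        linarith
      have hint2 : (∫ s in t'..1, b s) ≤ (n+1)/2 := by
        have hsplit := intervalIntegral.integral_add_adjacent_intervals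
          (intInt hc.1 ht'.1 ht'.2 hb_int) (intInt (le_trans hc.1 ht'.1) ht'.2 le_rfl hb_int)
        have : F t' + (∫ s in t'..1, b s) = ∫ s in c..1, b s := hsplit
        rw [hFt'] at this
        push_cast
        push_cast at hint
        linarith
      have hIH := ih t' ⟨le_trans hc.1 ht'.1, ht'.2⟩ (2*a) (by linarith) hint2 hineq2
      intro t ht
      rcases le_total t t' with h | h
      · have := hsub1 t ⟨ht.1, h⟩
        have h3 : (2:ℝ) ≤ 2^(n+1+1) := by
          calc (2:ℝ) = 2^1 := (pow_one 2).symm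
          _ ≤ 2^(n+1+1) := by apply pow_le_pow_right₀ one_le_two; omega
        nlinarith
      · have := hIH t ⟨h, ht.2⟩
        calc u t ≤ 2*a*2^(n+1) := this
        _ = a * 2^(n+1+1) := by ring

lemma cont_bound {u : ℝ → ℝ} (hu : ContinuousOn u (Icc (0:ℝ) 1)) :
    ∃ M : ℝ, 0 ≤ M ∧ ∀ t ∈ Icc (0:ℝ) 1, u t ≤ M := by
  obtain ⟨t₀, _, hmax⟩ := isCompact_Icc.exists_isMaxOn (nonempty_Icc.2 zero_le_one) hu
  exact ⟨max (u t₀) 0, le_max_right _ _, fun t ht => le_trans (hmax ht) (le_max_left _ _)⟩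

end Helpers

set_option maxHeartbeats 1000000 in
theorem stmt_16 (m : ℕ) (hm : 1 ≤ m) (δ : ℝ) (hδ : 0 < δ)
    (k : ℝ → Matrix (Fin m) (Fin m) ℝ)
    (kn : ℕ → ℝ → Matrix (Fin m) (Fin m) ℝ)
    (hkmeas : ∀ i j, Measurable fun s => k s i j)
    (hknmeas : ∀ n, ∀ i j, Measurable fun s => kn n s i j)
    (hksymm : ∀ s ∈ Set.Icc (0:ℝ) 1, (k s).IsSymm)
    (hknsymm : ∀ n, ∀ s ∈ Set.Icc (0:ℝ) 1, (kn n s).IsSymm)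
    (hkL2 : IntegrableOn (fun s => ‖k s‖ ^ 2) (Set.Icc 0 1))
    (hknL2 : ∀ n, IntegrableOn (fun s => ‖kn n s‖ ^ 2) (Set.Icc 0 1))
    (hconv : Tendsto (fun n => ∫ s in Set.Icc (0:ℝ) 1, ‖kn n s - k s‖ ^ 2) atTop (nhds 0))
    (φ : ℝ → Matrix (Fin m) (Fin m) ℝ)
    (φn : ℕ → ℝ → Matrix (Fin m) (Fin m) ℝ)
    (hφcont : ContinuousOn φ (Set.Icc 0 1))
    (hφncont : ∀ n, ContinuousOn (φn n) (Set.Icc 0 1))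
    (hφ : ∀ t ∈ Set.Icc (0:ℝ) 1,
      φ t = (δ * t) • (1 : Matrix (Fin m) (Fin m) ℝ)
          + ∫ s in (0:ℝ)..t, (k s * φ s + φ s * k s))
    (hφn : ∀ n, ∀ t ∈ Set.Icc (0:ℝ) 1,
      φn n t = (δ * t) • (1 : Matrix (Fin m) (Fin m) ℝ)
          + ∫ s in (0:ℝ)..t, (kn n s * φn n s + φn n s * kn n s)) :
    (∃ C : ℝ, ∀ n, ∀ t ∈ Set.Icc (0:ℝ) 1, ‖φn n t‖ ≤ C) ∧
    (∀ ε > (0:ℝ), ∃ N : ℕ, ∀ n ≥ N, ∀ t ∈ Set.Icc (0:ℝ) 1, ‖φn n t - φ t‖ < ε) := by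
  haveI : Nonempty (Fin m) := Fin.pos_iff_nonempty.mp hm
  have hIoc : ∀ f : ℝ → ℝ, (∫ s in (0:ℝ)..1, f s) = ∫ s in Set.Icc (0:ℝ) 1, f s := by
    intro f
    rw [intervalIntegral.integral_of_le zero_le_one, ← MeasureTheory.integral_Icc_eq_integral_Ioc]
  have hkaesm : AEStronglyMeasurable k (volume.restrict (Set.Icc (0:ℝ) 1)) :=
    aesm_of_entries k hkmeas
  have hknaesm : ∀ n, AEStronglyMeasurable (kn n) (volume.restrict (Set.Icc (0:ℝ) 1)) :=
    fun n => aesm_of_entries (kn n) (hknmeas n)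
  have hφaesm : AEStronglyMeasurable φ (volume.restrict (Set.Icc (0:ℝ) 1)) :=
    hφcont.aestronglyMeasurable measurableSet_Icc
  have hφnaesm : ∀ n, AEStronglyMeasurable (φn n) (volume.restrict (Set.Icc (0:ℝ) 1)) :=
    fun n => (hφncont n).aestronglyMeasurable measurableSet_Icc
  have hknorm : IntegrableOn (fun s => ‖k s‖) (Set.Icc (0:ℝ) 1) := norm_int_of_sq hkaesm hkL2
  have hknnorm : ∀ n, IntegrableOn (fun s => ‖kn n s‖) (Set.Icc (0:ℝ) 1) :=
    fun n => norm_int_of_sq (hknaesm n) (hknL2 n)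
  have hdL2 : ∀ n, IntegrableOn (fun s => ‖kn n s - k s‖^2) (Set.Icc (0:ℝ) 1) := by
    intro n
    refine (((hknL2 n).const_mul 2).add (hkL2.const_mul 2)).mono'
      (((hknaesm n).sub hkaesm).norm.pow 2) ?_
    filter_upwards with s
    have h1 := norm_sub_le (kn n s) (k s)
    have h2 : (0:ℝ) ≤ ‖kn n s - k s‖ := norm_nonneg _
    have h3 : (0:ℝ) ≤ ‖kn n s‖ := norm_nonneg _
    have h4 : (0:ℝ) ≤ ‖k s‖ := norm_nonneg _
    have h5 : ‖kn n s - k s‖^2 ≤ (‖kn n s‖ + ‖k s‖)^2 := by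
      apply pow_le_pow_left₀ h2 h1
    have : ‖kn n s - k s‖^2 ≤ 2*‖kn n s‖^2 + 2*‖k s‖^2 := by
      nlinarith [sq_nonneg (‖kn n s‖ - ‖k s‖)]
    simpa [abs_of_nonneg (sq_nonneg (‖kn n s - k s‖))] using this
  have hdnorm : ∀ n, IntegrableOn (fun s => ‖kn n s - k s‖) (Set.Icc (0:ℝ) 1) :=
    fun n => norm_int_of_sq ((hknaesm n).sub hkaesm) (hdL2 n)
  obtain ⟨Mφ, hMφ0, hMφ⟩ := cont_bound hφcont.norm
  have hprod : ∀ (K F : ℝ → Matrix (Fin m) (Fin m) ℝ),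
      AEStronglyMeasurable K (volume.restrict (Set.Icc (0:ℝ) 1)) →
      IntegrableOn (fun s => ‖K s‖) (Set.Icc (0:ℝ) 1) →
      AEStronglyMeasurable F (volume.restrict (Set.Icc (0:ℝ) 1)) →
      ∀ MF : ℝ, (∀ t ∈ Set.Icc (0:ℝ) 1, ‖F t‖ ≤ MF) →
      IntegrableOn (fun s => K s * F s + F s * K s) (Set.Icc (0:ℝ) 1) := by
    intro K F hK hKn hF MF hMF
    refine (hKn.const_mul (2*MF)).mono' ((hK.mul hF).add (hF.mul hK)) ?_
    filter_upwards [ae_restrict_mem measurableSet_Icc] with s hs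
    have h1 : ‖K s * F s‖ ≤ ‖K s‖ * ‖F s‖ := norm_mul_le _ _
    have h2 : ‖F s * K s‖ ≤ ‖F s‖ * ‖K s‖ := norm_mul_le _ _
    have h3 := hMF s hs
    have h4 : (0:ℝ) ≤ ‖K s‖ := norm_nonneg _
    have h5 : (0:ℝ) ≤ ‖F s‖ := norm_nonneg _
    calc ‖K s * F s + F s * K s‖ ≤ ‖K s * F s‖ + ‖F s * K s‖ := norm_add_le _ _
    _ ≤ 2*MF*‖K s‖ := by nlinarith
  choose Mn hMn0 hMn using fun j => cont_bound ((hφncont j).norm)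
  have hGk : IntegrableOn (fun s => k s * φ s + φ s * k s) (Set.Icc (0:ℝ) 1) :=
    hprod k φ hkaesm hknorm hφaesm Mφ hMφ
  have hGn : ∀ n, IntegrableOn (fun s => kn n s * φn n s + φn n s * kn n s) (Set.Icc (0:ℝ) 1) :=
    fun n => hprod (kn n) (φn n) (hknaesm n) (hknnorm n) (hφnaesm n) (Mn n) (hMn n)
  have hineq1 : ∀ n, ∀ t ∈ Set.Icc (0:ℝ) 1,
      (fun τ => ‖φn n τ‖) t ≤ δ + ∫ s in (0:ℝ)..t, (fun σ => 2*‖kn n σ‖) s * (fun τ => ‖φn n τ‖) s := by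
    intro n t ht
    simp only
    rw [hφn n t ht]
    refine le_trans (norm_add_le _ _) ?_
    have h1 : ‖(δ * t) • (1 : Matrix (Fin m) (Fin m) ℝ)‖ ≤ δ := by
      rw [norm_smul, norm_one, mul_one, Real.norm_eq_abs,
        abs_of_nonneg (by nlinarith [ht.1] : (0:ℝ) ≤ δ * t)]
      nlinarith [ht.2]
    have h2 : ‖∫ s in (0:ℝ)..t, (kn n s * φn n s + φn n s * kn n s)‖
        ≤ ∫ s in (0:ℝ)..t, ‖kn n s * φn n s + φn n s * kn n s‖ :=
      intervalIntegral.norm_integral_le_integral_norm ht.1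
    have h3 : (∫ s in (0:ℝ)..t, ‖kn n s * φn n s + φn n s * kn n s‖)
        ≤ ∫ s in (0:ℝ)..t, 2*‖kn n s‖ * ‖φn n s‖ := by
      apply intervalIntegral.integral_mono_on ht.1
        (intInt le_rfl ht.1 ht.2 (hGn n).norm)
        (intInt le_rfl ht.1 ht.2 (bu_int ((hknnorm n).const_mul 2) (hφncont n).norm))
      intro x hx
      calc ‖kn n x * φn n x + φn n x * kn n x‖
          ≤ ‖kn n x‖*‖φn n x‖ + ‖φn n x‖*‖kn n x‖ :=
            le_trans (norm_add_le _ _) (add_le_add (norm_mul_le _ _) (norm_mul_le _ _))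
      _ = 2*‖kn n x‖ * ‖φn n x‖ := by ring
    linarith
  have hL1conv : ∀ η : ℝ, 0 < η → ∃ N, ∀ n ≥ N,
      (∫ s in Set.Icc (0:ℝ) 1, ‖kn n s - k s‖) ≤ η := by
    intro η hη
    obtain ⟨N, hN⟩ := Metric.tendsto_atTop.mp hconv (η^2/2) (by positivity)
    refine ⟨N, fun n hn => ?_⟩
    have hsq : (∫ s in Set.Icc (0:ℝ) 1, ‖kn n s - k s‖^2) < η^2/2 := by
      have := hN n hn
      rw [Real.dist_eq, sub_zero] at this
      exact lt_of_le_of_lt (le_abs_self _) this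
    have hc4 : IntegrableOn (fun _ : ℝ => η/4) (Set.Icc (0:ℝ) 1) :=
      integrableOn_const (by simp)
    have hmono : (∫ s in Set.Icc (0:ℝ) 1, ‖kn n s - k s‖)
        ≤ ∫ s in Set.Icc (0:ℝ) 1, (‖kn n s - k s‖^2 * (1/η) + η/4) := by
      apply setIntegral_mono_on (hdnorm n) (((hdL2 n).mul_const (1/η)).add hc4) measurableSet_Icc
      intro x _
      simp only [Pi.add_apply]
      have h0 : (0:ℝ) ≤ ‖kn n x - k x‖ := norm_nonneg _
      rw [show ‖kn n x - k x‖^2 * (1/η) + η/4 = (‖kn n x - k x‖^2 + η^2/4)/η by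
        field_simp, le_div_iff₀ hη]
      nlinarith [sq_nonneg (‖kn n x - k x‖ - η/2)]
    have hsplit : (∫ s in Set.Icc (0:ℝ) 1, (‖kn n s - k s‖^2 * (1/η) + η/4))
        = (∫ s in Set.Icc (0:ℝ) 1, ‖kn n s - k s‖^2) * (1/η)
          + (volume (Set.Icc (0:ℝ) 1)).toReal * (η/4) := by
      rw [integral_add ((hdL2 n).mul_const (1/η)) hc4, integral_mul_const, setIntegral_const]
      simp
    have hvol : (volume (Set.Icc (0:ℝ) 1)).toReal = 1 := by
      rw [Real.volume_Icc]; norm_num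
    rw [hsplit, hvol] at hmono
    have hnn : 0 ≤ (∫ s in Set.Icc (0:ℝ) 1, ‖kn n s - k s‖^2) :=
      setIntegral_nonneg measurableSet_Icc (fun x _ => sq_nonneg _)
    have h7 : (∫ s in Set.Icc (0:ℝ) 1, ‖kn n s - k s‖^2) * (1/η) ≤ (η^2/2) * (1/η) := by
      apply mul_le_mul_of_nonneg_right hsq.le (by positivity)
    have h8 : (η^2/2) * (1/η) = η/2 := by field_simp
    linarith
  obtain ⟨N₁, hN₁⟩ := hL1conv 1 one_pos
  set Ik := ∫ s in Set.Icc (0:ℝ) 1, ‖k s‖ with hIk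
  have hbbound : ∀ n, N₁ ≤ n → (∫ s in (0:ℝ)..1, 2*‖kn n s‖) ≤ 2*(Ik+1) := by
    intro n hn
    rw [hIoc]
    have h1 : (∫ s in Set.Icc (0:ℝ) 1, 2*‖kn n s‖)
        ≤ ∫ s in Set.Icc (0:ℝ) 1, (2*‖k s‖ + 2*‖kn n s - k s‖) := by
      apply setIntegral_mono_on ((hknnorm n).const_mul 2)
        ((hknorm.const_mul 2).add ((hdnorm n).const_mul 2)) measurableSet_Icc
      intro x _
      simp only [Pi.add_apply]
      have : ‖kn n x‖ ≤ ‖k x‖ + ‖kn n x - k x‖ := by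
        calc ‖kn n x‖ = ‖k x + (kn n x - k x)‖ := by congr 1; abel
        _ ≤ ‖k x‖ + ‖kn n x - k x‖ := norm_add_le _ _
      linarith
    have h2 : (∫ s in Set.Icc (0:ℝ) 1, (2*‖k s‖ + 2*‖kn n s - k s‖))
        = 2*Ik + 2*(∫ s in Set.Icc (0:ℝ) 1, ‖kn n s - k s‖) := by
      rw [integral_add (hknorm.const_mul 2) ((hdnorm n).const_mul 2),
        integral_const_mul, integral_const_mul]
    have h3 := hN₁ n hn
    rw [h2] at h1
    linarith
  set n₀ := ⌈4*(Ik+1)⌉₊ with hn₀def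
  have hceil : 4*(Ik+1) ≤ (n₀ : ℝ) := Nat.le_ceil _
  have hIk0 : 0 ≤ Ik := setIntegral_nonneg measurableSet_Icc (fun x _ => norm_nonneg _)
  have hn₀' : ∀ n, N₁ ≤ n → (∫ s in (0:ℝ)..1, (fun σ => 2*‖kn n σ‖) s) ≤ ((n₀ : ℝ)+1)/2 := by
    intro n hn
    have := hbbound n hn
    simp only at this ⊢
    linarith
  set C1 := δ * 2^(n₀+1) with hC1def
  have hC1 : ∀ n, N₁ ≤ n → ∀ t ∈ Set.Icc (0:ℝ) 1, ‖φn n t‖ ≤ C1 := by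
    intro n hn t ht
    exact gron (bu_int ((hknnorm n).const_mul 2) (hφncont n).norm)
      ((hknnorm n).const_mul 2) (fun s _ => by positivity)
      (hφncont n).norm (fun τ _ => norm_nonneg _)
      n₀ 0 ⟨le_rfl, zero_le_one⟩ δ hδ.le (hn₀' n hn) (hineq1 n) t ht
  constructor
  · choose Bn hBn0 hBn using fun j => cont_bound ((hφncont j).norm)
    refine ⟨C1 + ∑ j ∈ Finset.range N₁, Bn j, ?_⟩
    intro n t ht
    have hsum0 : 0 ≤ ∑ j ∈ Finset.range N₁, Bn j := Finset.sum_nonneg (fun j _ => hBn0 j)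
    rcases lt_or_ge n N₁ with h | h
    · have h1 := hBn n t ht
      have h2 : Bn n ≤ ∑ j ∈ Finset.range N₁, Bn j :=
        Finset.single_le_sum (fun j _ => hBn0 j) (Finset.mem_range.2 h)
      have hC10 : 0 ≤ C1 := by positivity
      linarith
    · have := hC1 n h t ht; linarith
  · intro ε hε
    set P := (2:ℝ)^(n₀+1) with hPdef
    have hPpos : 0 < P := by positivity
    have hη' : 0 < ε / (4*(Mφ+1)*P) := by positivity
    obtain ⟨N₂, hN₂⟩ := hL1conv (ε / (4*(Mφ+1)*P)) hη'
    refine ⟨max N₁ N₂, ?_⟩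
    intro n hn t ht
    have hn1 : N₁ ≤ n := le_trans (le_max_left _ _) hn
    have hn2 : N₂ ≤ n := le_trans (le_max_right _ _) hn
    set En := ∫ s in Set.Icc (0:ℝ) 1, ‖kn n s - k s‖ with hEndef
    have hEn0 : 0 ≤ En := setIntegral_nonneg measurableSet_Icc (fun x _ => norm_nonneg _)
    have hEnη : En ≤ ε / (4*(Mφ+1)*P) := hN₂ n hn2
    have hψcont : ContinuousOn (fun τ => φn n τ - φ τ) (Set.Icc (0:ℝ) 1) :=
      (hφncont n).sub hφcont
    have hineq2 : ∀ τ ∈ Set.Icc (0:ℝ) 1,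
        (fun σ => ‖φn n σ - φ σ‖) τ ≤ (2*Mφ*En)
          + ∫ s in (0:ℝ)..τ, (fun σ => 2*‖kn n σ‖) s * (fun σ => ‖φn n σ - φ σ‖) s := by
      intro τ hτ
      simp only
      have heq : φn n τ - φ τ = ∫ s in (0:ℝ)..τ,
          ((kn n s * φn n s + φn n s * kn n s) - (k s * φ s + φ s * k s)) := by
        have h0 : (∫ s in (0:ℝ)..τ,
            ((kn n s * φn n s + φn n s * kn n s) - (k s * φ s + φ s * k s)))
            = (∫ s in (0:ℝ)..τ, (kn n s * φn n s + φn n s * kn n s))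
              - ∫ s in (0:ℝ)..τ, (k s * φ s + φ s * k s) :=
          intervalIntegral.integral_sub (intInt le_rfl hτ.1 hτ.2 (hGn n))
            (intInt le_rfl hτ.1 hτ.2 hGk)
        rw [hφn n τ hτ, hφ τ hτ, h0]
        abel
      rw [heq]
      have h2 : ‖∫ s in (0:ℝ)..τ,
            ((kn n s * φn n s + φn n s * kn n s) - (k s * φ s + φ s * k s))‖
          ≤ ∫ s in (0:ℝ)..τ,
            ‖(kn n s * φn n s + φn n s * kn n s) - (k s * φ s + φ s * k s)‖ :=
        intervalIntegral.norm_integral_le_integral_norm hτ.1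
      have hpt : ∀ x ∈ Set.Icc (0:ℝ) τ,
          ‖(kn n x * φn n x + φn n x * kn n x) - (k x * φ x + φ x * k x)‖
          ≤ 2*‖kn n x‖ * ‖φn n x - φ x‖ + 2*Mφ*‖kn n x - k x‖ := by
        intro x hx
        have hx' : x ∈ Set.Icc (0:ℝ) 1 := ⟨hx.1, le_trans hx.2 hτ.2⟩
        have hid : (kn n x * φn n x + φn n x * kn n x) - (k x * φ x + φ x * k x)
            = (kn n x * (φn n x - φ x) + (φn n x - φ x) * kn n x)
              + ((kn n x - k x) * φ x + φ x * (kn n x - k x)) := by noncomm_ring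
        rw [hid]
        have e1 : ‖kn n x * (φn n x - φ x)‖ ≤ ‖kn n x‖ * ‖φn n x - φ x‖ := norm_mul_le _ _
        have e2 : ‖(φn n x - φ x) * kn n x‖ ≤ ‖φn n x - φ x‖ * ‖kn n x‖ := norm_mul_le _ _
        have e3 : ‖(kn n x - k x) * φ x‖ ≤ ‖kn n x - k x‖ * ‖φ x‖ := norm_mul_le _ _
        have e4 : ‖φ x * (kn n x - k x)‖ ≤ ‖φ x‖ * ‖kn n x - k x‖ := norm_mul_le _ _
        have e5 := hMφ x hx'
        have e6 : (0:ℝ) ≤ ‖kn n x - k x‖ := norm_nonneg _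
        have e7 : (0:ℝ) ≤ ‖φ x‖ := norm_nonneg _
        calc ‖(kn n x * (φn n x - φ x) + (φn n x - φ x) * kn n x)
              + ((kn n x - k x) * φ x + φ x * (kn n x - k x))‖
            ≤ ‖kn n x * (φn n x - φ x) + (φn n x - φ x) * kn n x‖
              + ‖(kn n x - k x) * φ x + φ x * (kn n x - k x)‖ := norm_add_le _ _
        _ ≤ (‖kn n x * (φn n x - φ x)‖ + ‖(φn n x - φ x) * kn n x‖)
              + (‖(kn n x - k x) * φ x‖ + ‖φ x * (kn n x - k x)‖) :=
            add_le_add (norm_add_le _ _) (norm_add_le _ _)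
        _ ≤ 2*‖kn n x‖ * ‖φn n x - φ x‖ + 2*Mφ*‖kn n x - k x‖ := by nlinarith
      have hbu2 : IntegrableOn (fun s => 2*‖kn n s‖ * ‖φn n s - φ s‖) (Set.Icc (0:ℝ) 1) :=
        bu_int ((hknnorm n).const_mul 2) hψcont.norm
      have hcd : IntegrableOn (fun s => 2*Mφ*‖kn n s - k s‖) (Set.Icc (0:ℝ) 1) :=
        (hdnorm n).const_mul (2*Mφ)
      have h3 : (∫ s in (0:ℝ)..τ,
            ‖(kn n s * φn n s + φn n s * kn n s) - (k s * φ s + φ s * k s)‖)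
          ≤ ∫ s in (0:ℝ)..τ, (2*‖kn n s‖ * ‖φn n s - φ s‖ + 2*Mφ*‖kn n s - k s‖) := by
        apply intervalIntegral.integral_mono_on hτ.1
          (intInt le_rfl hτ.1 hτ.2 ((hGn n).sub hGk).norm)
          (intInt le_rfl hτ.1 hτ.2 (hbu2.add hcd))
        exact hpt
      have h4 : (∫ s in (0:ℝ)..τ, (2*‖kn n s‖ * ‖φn n s - φ s‖ + 2*Mφ*‖kn n s - k s‖))
          = (∫ s in (0:ℝ)..τ, 2*‖kn n s‖ * ‖φn n s - φ s‖)
            + ∫ s in (0:ℝ)..τ, 2*Mφ*‖kn n s - k s‖ :=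
        intervalIntegral.integral_add (intInt le_rfl hτ.1 hτ.2 hbu2)
          (intInt le_rfl hτ.1 hτ.2 hcd)
      have h5 : (∫ s in (0:ℝ)..τ, 2*Mφ*‖kn n s - k s‖) ≤ 2*Mφ*En := by
        rw [intervalIntegral.integral_of_le hτ.1]
        have hmono2 : (∫ s in Set.Ioc (0:ℝ) τ, 2*Mφ*‖kn n s - k s‖)
            ≤ ∫ s in Set.Icc (0:ℝ) 1, 2*Mφ*‖kn n s - k s‖ := by
          apply setIntegral_mono_set hcd
          · filter_upwards with x
            positivity
          · exact HasSubset.Subset.eventuallyLE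
              (le_trans Set.Ioc_subset_Icc_self (Set.Icc_subset_Icc le_rfl hτ.2))
        have heq2 : (∫ s in Set.Icc (0:ℝ) 1, 2*Mφ*‖kn n s - k s‖) = 2*Mφ*En := by
          rw [hEndef, integral_const_mul]
        linarith
      linarith
    have hg := gron (b := fun σ => 2*‖kn n σ‖) (u := fun σ => ‖φn n σ - φ σ‖) (bu_int ((hknnorm n).const_mul 2) hψcont.norm)
      ((hknnorm n).const_mul 2) (fun s _ => by positivity)
      hψcont.norm (fun τ _ => norm_nonneg _)
      n₀ 0 ⟨le_rfl, zero_le_one⟩ (2*Mφ*En) (by positivity) (hn₀' n hn1) hineq2 t ht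
    have hfin : 2*Mφ*En * 2^(n₀+1) ≤ ε/2 := by
      have hstep : 2*Mφ*En*P ≤ 2*(Mφ+1)*(ε / (4*(Mφ+1)*P))*P := by
        have hM1 : Mφ ≤ Mφ + 1 := by linarith
        have h9 : Mφ * En ≤ (Mφ+1) * (ε / (4*(Mφ+1)*P)) :=
          mul_le_mul hM1 hEnη hEn0 (by positivity)
        have h10 := mul_le_mul_of_nonneg_right h9 hPpos.le
        nlinarith [h10]
      have heqq : 2*(Mφ+1)*(ε / (4*(Mφ+1)*P))*P = ε/2 := by
        field_simp
        ring
      rw [← hPdef]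
      linarith
    have hlast : (0:ℝ) < ε/2 := by linarith
    calc ‖φn n t - φ t‖ ≤ 2*Mφ*En * 2^(n₀+1) := hg
    _ ≤ ε/2 := hfin
    _ < ε := by linarith
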